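/- arXiv:1811.12279 — 2 statements merged into one kernel-verified Lean document; each statement's English description precedes it below -/
import Mathlib

section
/- The support function of the Newton polytope is additive under polynomial multiplication: for nonzero f, g ∈ ℂ[x₁,…,xₙ] and any ω ∈ ℝⁿ, h_{New(fg)}(ω) = h_{New(f)}(ω) + h_{New(g)}(ω). -/
open Finset in
/-- Max over the convex hull of the image equals max over the support itself. -/
lemma newton_key (n : ℕ) (ω : Fin n → ℝ) (p : MvPolynomial (Fin n) ℂ) (hp : p ≠ 0) (c : ℝ)
    (hc : IsGreatest ((fun x => ∑ i, x i * ω i) ''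
      convexHull ℝ ((fun d : Fin n →₀ ℕ => fun i => (d i : ℝ)) '' (p.support : Set (Fin n →₀ ℕ)))) c) :
    IsGreatest ((fun d : Fin n →₀ ℕ => ∑ i, (d i : ℝ) * ω i) '' (p.support : Set (Fin n →₀ ℕ))) c := by
  have hne : p.support.Nonempty := MvPolynomial.support_nonempty.mpr hp
  obtain ⟨d0, hd0, hd0max⟩ := p.support.exists_max_image (fun d => ∑ i, (d i : ℝ) * ω i) hne
  have hub : ∀ d ∈ p.support, (∑ i, (d i : ℝ) * ω i) ≤ c := by
    intro d hd
    exact hc.2 ⟨fun i => (d i : ℝ), subset_convexHull ℝ _ ⟨d, hd, rfl⟩, rfl⟩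
  have hL : IsLinearMap ℝ (fun x : Fin n → ℝ => ∑ i, x i * ω i) := by
    constructor
    · intro x y; simp [add_mul, Finset.sum_add_distrib]
    · intro c x; simp [Finset.mul_sum, mul_assoc]
  have hle : c ≤ ∑ i, (d0 i : ℝ) * ω i := by
    obtain ⟨x, hx, hxc⟩ := hc.1
    have hsub : convexHull ℝ ((fun d : Fin n →₀ ℕ => fun i => (d i : ℝ)) '' (p.support : Set (Fin n →₀ ℕ)))
        ⊆ {y | (∑ i, y i * ω i) ≤ ∑ i, (d0 i : ℝ) * ω i} := by
      apply convexHull_min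
      · rintro _ ⟨d, hd, rfl⟩; exact hd0max d hd
      · exact convex_halfSpace_le hL _
    exact hxc ▸ hsub hx
  have hceq : c = ∑ i, (d0 i : ℝ) * ω i := le_antisymm hle (hub d0 hd0)
  exact ⟨⟨d0, hd0, hceq.symm⟩, by rintro _ ⟨d, hd, rfl⟩; exact hub d hd⟩

set_option maxHeartbeats 1000000 in
/-- The support function of the Newton polytope is additive under multiplication:
`h_{New(fg)}(ω) = h_{New(f)}(ω) + h_{New(g)}(ω)`. -/
theorem newton_support_function_additive
    (n : ℕ) (f g : MvPolynomial (Fin n) ℂ) (hf : f ≠ 0) (hg : g ≠ 0)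
    (ω : Fin n → ℝ) (hfω hgω hfgω : ℝ)
    (hhf : IsGreatest ((fun x => ∑ i, x i * ω i) ''
      convexHull ℝ ((fun d : Fin n →₀ ℕ => fun i => (d i : ℝ)) '' (f.support : Set (Fin n →₀ ℕ)))) hfω)
    (hhg : IsGreatest ((fun x => ∑ i, x i * ω i) ''
      convexHull ℝ ((fun d : Fin n →₀ ℕ => fun i => (d i : ℝ)) '' (g.support : Set (Fin n →₀ ℕ)))) hgω)
    (hhfg : IsGreatest ((fun x => ∑ i, x i * ω i) ''
      convexHull ℝ ((fun d : Fin n →₀ ℕ => fun i => (d i : ℝ)) '' ((f * g).support : Set (Fin n →₀ ℕ)))) hfgω) :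
    hfgω = hfω + hgω := by
  haveI : DecidablePred (fun d : Fin n →₀ ℕ => (∑ i, (d i : ℝ) * ω i) = hfω) := Classical.decPred _
  haveI : DecidablePred (fun d : Fin n →₀ ℕ => (∑ i, (d i : ℝ) * ω i) = hgω) := Classical.decPred _
  set w : (Fin n →₀ ℕ) → ℝ := fun d => ∑ i, (d i : ℝ) * ω i with hwdef
  have hwadd : ∀ a b : Fin n →₀ ℕ, w (a + b) = w a + w b := by
    intro a b
    simp [hwdef, Finsupp.add_apply, add_mul, Finset.sum_add_distrib]
  have hfg : f * g ≠ 0 := mul_ne_zero hf hg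
  have kf := newton_key n ω f hf hfω hhf
  have kg := newton_key n ω g hg hgω hhg
  have kfg := newton_key n ω (f * g) hfg hfgω hhfg
  -- upper bounds over supports
  have hfub : ∀ d ∈ f.support, w d ≤ hfω := fun d hd => kf.2 ⟨d, hd, rfl⟩
  have hgub : ∀ d ∈ g.support, w d ≤ hgω := fun d hd => kg.2 ⟨d, hd, rfl⟩
  -- pick lex-maximal weight-maximizers
  obtain ⟨af, haf, hafw⟩ := kf.1
  obtain ⟨bg, hbg, hbgw⟩ := kg.1
  set Sf : Finset (Fin n →₀ ℕ) := f.support.filter (fun d => w d = hfω) with hSf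
  set Sg : Finset (Fin n →₀ ℕ) := g.support.filter (fun d => w d = hgω) with hSg
  have hSfne : Sf.Nonempty := ⟨af, Finset.mem_filter.mpr ⟨haf, hafw⟩⟩
  have hSgne : Sg.Nonempty := ⟨bg, Finset.mem_filter.mpr ⟨hbg, hbgw⟩⟩
  obtain ⟨a0, ha0, ha0max⟩ := Sf.exists_max_image (fun d => toLex d) hSfne
  obtain ⟨b0, hb0, hb0max⟩ := Sg.exists_max_image (fun d => toLex d) hSgne
  have ha0s : a0 ∈ f.support := (Finset.mem_filter.mp ha0).1
  have ha0w : w a0 = hfω := (Finset.mem_filter.mp ha0).2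
  have hb0s : b0 ∈ g.support := (Finset.mem_filter.mp hb0).1
  have hb0w : w b0 = hgω := (Finset.mem_filter.mp hb0).2
  -- the coefficient of f*g at a0 + b0 is f.coeff a0 * g.coeff b0
  have hside : ∀ ab ∈ Finset.HasAntidiagonal.antidiagonal (a0 + b0), ab ≠ (a0, b0) →
      MvPolynomial.coeff ab.1 f * MvPolynomial.coeff ab.2 g = 0 := by
    rintro ⟨a, b⟩ hab hne
    rw [Finset.HasAntidiagonal.mem_antidiagonal] at hab
    by_contra hnz
    have ha : a ∈ f.support := by
      rw [MvPolynomial.mem_support_iff]; intro h0; apply hnz; rw [h0]; ring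
    have hb : b ∈ g.support := by
      rw [MvPolynomial.mem_support_iff]; intro h0; apply hnz; rw [h0]; ring
    have hwa : w a ≤ hfω := hfub a ha
    have hwb : w b ≤ hgω := hgub b hb
    have hsum : w a + w b = hfω + hgω := by
      rw [← hwadd, hab, hwadd, ha0w, hb0w]
    have hwa' : w a = hfω := by linarith
    have hwb' : w b = hgω := by linarith
    have haSf : a ∈ Sf := Finset.mem_filter.mpr ⟨ha, hwa'⟩
    have hbSg : b ∈ Sg := Finset.mem_filter.mpr ⟨hb, hwb'⟩
    have hla : toLex a ≤ toLex a0 := ha0max a haSf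
    have hlb : toLex b ≤ toLex b0 := hb0max b hbSg
    have hlsum : toLex a + toLex b = toLex a0 + toLex b0 := by
      rw [← toLex_add, ← toLex_add, hab]
    have haeq : toLex a = toLex a0 := by
      rcases lt_or_eq_of_le hla with hlt | heq
      · exfalso
        have : toLex a + toLex b < toLex a0 + toLex b0 :=
          add_lt_add_of_lt_of_le hlt hlb
        exact absurd hlsum (ne_of_lt this)
      · exact heq
    have hbeq : toLex b = toLex b0 := by
      have h2 := hlsum
      rw [haeq] at h2
      exact add_left_cancel h2
    exact hne (Prod.ext (toLex.injective haeq) (toLex.injective hbeq))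
  have hcoeff : MvPolynomial.coeff (a0 + b0) (f * g) =
      MvPolynomial.coeff a0 f * MvPolynomial.coeff b0 g := by
    rw [MvPolynomial.coeff_mul,
      Finset.sum_eq_single_of_mem (a0, b0) (Finset.HasAntidiagonal.mem_antidiagonal.mpr rfl) hside]
  have hmem : a0 + b0 ∈ (f * g).support := by
    rw [MvPolynomial.mem_support_iff, hcoeff]
    exact mul_ne_zero (MvPolynomial.mem_support_iff.mp ha0s) (MvPolynomial.mem_support_iff.mp hb0s)
  -- upper bound for the product
  have hprodub : ∀ d ∈ (f * g).support, w d ≤ hfω + hgω := by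
    intro d hd
    have := MvPolynomial.support_mul f g hd
    rw [Finset.mem_add] at this
    obtain ⟨a, ha, b, hb, hab⟩ := this
    rw [← hab, hwadd]
    exact add_le_add (hfub a ha) (hgub b hb)
  have : IsGreatest ((fun d : Fin n →₀ ℕ => ∑ i, (d i : ℝ) * ω i) ''
      ((f * g).support : Set (Fin n →₀ ℕ))) (hfω + hgω) := by
    constructor
    · exact ⟨a0 + b0, hmem, by rw [← hwdef]; rw [hwadd, ha0w, hb0w]⟩
    · rintro _ ⟨d, hd, rfl⟩; exact hprodub d hd
  exact kfg.unique this
end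

section
/- Key inequality in the convergence proof: with notation as in the HS-algorithm, if p(t) is a root of f(L_t)(s) (i.e., f(L_t)(p(t)) = 0) and ω ∈ trop(V(f)), then |f_ω(a·p(t) − b)| ≤ t^{−d_ω} · Σ_{α ∈ F^c} |c_α| · |(a·p(t) − b)^α| for all t ≥ 1, where (a·s − b)^α denotes Π_i (a_i s − b_i)^{α_i}. -/
open Classical

/-- Key inequality in the convergence proof: if `p(t)` is a root of `f(L_t)` and
`ω ∈ trop(V(f))`, then
`|f_ω(a·p(t) − b)| ≤ t^{−d_ω} Σ_{α ∈ Fᶜ} |c_α| |(a·p(t) − b)^α|` for `t ≥ 1`. -/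
theorem hs_key_inequality
    (n d : ℕ) (A : Finset (Fin n → ℕ)) (hA : A.Nonempty)
    (c : (Fin n → ℕ) → ℂ) (hc : ∀ α ∈ A, c α ≠ 0)
    (hdeg : ∀ α ∈ A, ∑ i, α i ≤ d)
    (ω : Fin n → ℝ) (hω : ℝ)
    (hmax : IsGreatest ((fun α : Fin n → ℕ => ∑ i, ω i * (α i : ℝ)) ''
      (A : Set (Fin n → ℕ))) hω)
    (F : Finset (Fin n → ℕ))
    (hF : F = A.filter (fun α => ∑ i, ω i * (α i : ℝ) = hω))
    (htrop : 1 < F.card)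
    (a b : Fin n → ℂ)
    (dω : ℝ)
    (hdω : IsLeast ((fun α : Fin n → ℕ => hω - ∑ i, ω i * (α i : ℝ)) ''
      ((A \ F : Finset (Fin n → ℕ)) : Set (Fin n → ℕ))) dω)
    (hdωpos : 0 < dω)
    (p : ℝ → ℂ) (t : ℝ) (ht : 1 ≤ t)
    (hroot : ∑ α ∈ A, c α * ((t ^ (∑ i, ω i * (α i : ℝ)) : ℝ) : ℂ) *
        ∏ i, (a i * p t - b i) ^ α i = 0) :
    ‖∑ α ∈ F, c α * ∏ i, (a i * p t - b i) ^ α i‖ ≤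
      t ^ (-dω) * ∑ α ∈ A \ F,
        ‖c α‖ * ‖∏ i, (a i * p t - b i) ^ α i‖ := by
  have ht0 : (0:ℝ) < t := lt_of_lt_of_le one_pos ht
  set x : (Fin n → ℕ) → ℂ := fun α => ∏ i, (a i * p t - b i) ^ α i with hx
  set e : (Fin n → ℕ) → ℝ := fun α => ∑ i, ω i * (α i : ℝ) with he
  have hFA : F ⊆ A := by rw [hF]; exact Finset.filter_subset _ _
  -- on F the exponent is hω
  have hFe : ∀ α ∈ F, e α = hω := by
    intro α hα
    rw [hF] at hα
    exact (Finset.mem_filter.mp hα).2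
  -- key equation
  have hsplit : (∑ α ∈ A \ F, c α * ((t ^ e α : ℝ) : ℂ) * x α)
      + ∑ α ∈ F, c α * ((t ^ e α : ℝ) : ℂ) * x α = 0 := by
    rw [Finset.sum_sdiff hFA]; exact hroot
  have heq : ((t ^ hω : ℝ) : ℂ) * ∑ α ∈ F, c α * x α
      = - ∑ α ∈ A \ F, c α * ((t ^ e α : ℝ) : ℂ) * x α := by
    have : ∑ α ∈ F, c α * ((t ^ e α : ℝ) : ℂ) * x α
        = ((t ^ hω : ℝ) : ℂ) * ∑ α ∈ F, c α * x α := by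
      rw [Finset.mul_sum]
      refine Finset.sum_congr rfl fun α hα => ?_
      rw [hFe α hα]; ring
    rw [this] at hsplit
    linear_combination hsplit
  -- take absolute values
  have habs : (t ^ hω) * ‖∑ α ∈ F, c α * x α‖
      ≤ ∑ α ∈ A \ F, ‖c α‖ * (t ^ e α) * ‖x α‖ := by
    have h1 : ‖((t ^ hω : ℝ) : ℂ) * ∑ α ∈ F, c α * x α‖
        = (t ^ hω) * ‖∑ α ∈ F, c α * x α‖ := by
      rw [norm_mul, Complex.norm_real, Real.norm_eq_abs, abs_of_pos (Real.rpow_pos_of_pos ht0 _)]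
    rw [← h1, heq, norm_neg]
    refine le_trans (norm_sum_le _ _) ?_
    refine le_of_eq (Finset.sum_congr rfl fun α hα => ?_)
    rw [norm_mul, norm_mul, Complex.norm_real, Real.norm_eq_abs, abs_of_pos (Real.rpow_pos_of_pos ht0 _)]
  -- bound each exponent
  have hbound : ∑ α ∈ A \ F, ‖c α‖ * (t ^ e α) * ‖x α‖
      ≤ ∑ α ∈ A \ F, ‖c α‖ * (t ^ (hω - dω)) * ‖x α‖ := by
    refine Finset.sum_le_sum fun α hα => ?_
    have hle : dω ≤ hω - e α := hdω.2 ⟨α, by simpa using hα, rfl⟩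
    have : e α ≤ hω - dω := by linarith
    have h2 : t ^ e α ≤ t ^ (hω - dω) := Real.rpow_le_rpow_of_exponent_le ht this
    have h3 : 0 ≤ ‖c α‖ := norm_nonneg _
    have h4 : 0 ≤ ‖x α‖ := norm_nonneg _
    exact mul_le_mul_of_nonneg_right (mul_le_mul_of_nonneg_left h2 h3) h4
  have hfin : (t ^ hω) * ‖∑ α ∈ F, c α * x α‖
      ≤ (t ^ hω) * (t ^ (-dω) *
        ∑ α ∈ A \ F, ‖c α‖ * ‖x α‖) := by
    refine le_trans habs (le_trans hbound (le_of_eq ?_))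
    rw [Finset.mul_sum, Finset.mul_sum]
    refine Finset.sum_congr rfl fun α hα => ?_
    rw [show hω - dω = hω + (-dω) by ring, Real.rpow_add ht0]
    ring
  exact le_of_mul_le_mul_left hfin (Real.rpow_pos_of_pos ht0 _)
end
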